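/- In the binary i.i.d. model with the two-threshold SPRT defined in the context, as T → ∞ one has N_0 / log T → c / D(p_0‖p_1) almost surely under ℙ_0, and N_1 / log T → 1 / D(p_1‖p_0) almost surely under ℙ_1. -/

import Mathlib

open MeasureTheory Filter
open scoped ENNReal

set_option linter.unusedSectionVars false


lemma myS_atTop (S : ℕ → ℝ) (D : ℝ) (hD : 0 < D)
    (hS : Tendsto (fun n => S n / n) atTop (nhds D)) :
    Tendsto S atTop atTop := by
  have h1 : Tendsto (fun n : ℕ => (S n / n) * n) atTop atTop :=
    Tendsto.pos_mul_atTop hD hS tendsto_natCast_atTop_atTop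
  refine h1.congr' ?_
  filter_upwards [eventually_ge_atTop 1] with n hn
  have : (n : ℝ) ≠ 0 := by positivity
  field_simp

lemma hit_nonempty (S : ℕ → ℝ) (hS : Tendsto S atTop atTop) (L : ℝ) :
    {m : ℕ | 1 ≤ m ∧ L ≤ S m}.Nonempty := by
  obtain ⟨n0, hn0⟩ := (tendsto_atTop.1 hS L).exists_forall_of_atTop
  exact ⟨max 1 n0, le_max_left _ _, hn0 _ (le_max_right _ _)⟩

lemma det (S : ℕ → ℝ) (D : ℝ) (hD : 0 < D)
    (hS : Tendsto (fun n => S n / n) atTop (nhds D)) :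
    Tendsto (fun L : ℝ => ((sInf {m : ℕ | 1 ≤ m ∧ L ≤ S m} : ℕ) : ℝ) / L) atTop
      (nhds D⁻¹) := by
  set N : ℝ → ℕ := fun L => sInf {m : ℕ | 1 ≤ m ∧ L ≤ S m} with hN
  have hStop := myS_atTop S D hD hS
  have hmem : ∀ L, 1 ≤ N L ∧ L ≤ S (N L) :=
    fun L => Nat.sInf_mem (hit_nonempty S hStop L)
  -- N tends to atTop
  have hNtop : Tendsto N atTop atTop := by
    rw [tendsto_atTop]
    intro M
    rcases Nat.eq_zero_or_pos M with hM | hM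
    · filter_upwards with L; omega
    · have hne : ((Finset.range M).image S).Nonempty := by
        simp only [Finset.image_nonempty, Finset.nonempty_range_iff]; omega
      set C := ((Finset.range M).image S).max' hne with hC
      filter_upwards [eventually_gt_atTop C] with L hL
      by_contra hcon
      push_neg at hcon
      have h1 : S (N L) ∈ (Finset.range M).image S :=
        Finset.mem_image_of_mem S (Finset.mem_range.2 hcon)
      have := Finset.le_max' _ _ h1
      have := (hmem L).2
      linarith
  -- upper sequence
  have ha : Tendsto (fun L => S (N L) / (N L : ℝ)) atTop (nhds D) :=
    hS.comp hNtop
  -- lower sequence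
  have hb : Tendsto (fun n : ℕ => S (n - 1) / (n : ℝ)) atTop (nhds D) := by
    have h1 : Tendsto (fun n : ℕ => S (n - 1) / ((n - 1 : ℕ) : ℝ)) atTop (nhds D) :=
      hS.comp (tendsto_sub_atTop_nat 1)
    have h2 : Tendsto (fun n : ℕ => ((n - 1 : ℕ) : ℝ) / (n : ℝ)) atTop (nhds 1) := by
      have h3 : Tendsto (fun n : ℕ => 1 - 1 / (n : ℝ)) atTop (nhds (1 - 0)) :=
        tendsto_const_nhds.sub tendsto_one_div_atTop_nhds_zero_nat
      rw [sub_zero] at h3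
      refine h3.congr' ?_
      filter_upwards [eventually_ge_atTop 1] with n hn
      have hn' : (1:ℝ) ≤ (n:ℝ) := by exact_mod_cast hn
      rw [Nat.cast_sub hn]
      field_simp
      simp
    have h4 := h1.mul h2
    rw [mul_one] at h4
    refine h4.congr' ?_
    filter_upwards [eventually_ge_atTop 2] with n hn
    have hn1 : ((n - 1 : ℕ) : ℝ) ≠ 0 := by
      have : 1 ≤ n - 1 := by omega
      positivity
    rw [div_mul_div_comm, mul_comm (S (n-1)), mul_div_mul_left _ _ hn1]
  have hbN : Tendsto (fun L => S (N L - 1) / (N L : ℝ)) atTop (nhds D) :=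
    hb.comp hNtop
  -- squeeze for L / N L
  have hquot : Tendsto (fun L => L / (N L : ℝ)) atTop (nhds D) := by
    refine tendsto_of_tendsto_of_tendsto_of_le_of_le' hbN ha ?_ ?_
    · filter_upwards [hNtop.eventually (eventually_ge_atTop 2)] with L hL
      have hNpos : (0:ℝ) < (N L : ℝ) := by positivity
      have hlt : N L - 1 < N L := by omega
      have hnotmem : N L - 1 ∉ {m : ℕ | 1 ≤ m ∧ L ≤ S m} :=
        Nat.notMem_of_lt_sInf hlt
      have : ¬ (1 ≤ N L - 1 ∧ L ≤ S (N L - 1)) := hnotmem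
      have h5 : S (N L - 1) < L := by
        by_contra h
        push_neg at h
        exact this ⟨by omega, h⟩
      exact div_le_div_of_nonneg_right h5.le hNpos.le |>.trans le_rfl
    · filter_upwards with L
      have hNpos : (0:ℝ) < (N L : ℝ) := by
        have := (hmem L).1; positivity
      exact div_le_div_of_nonneg_right (hmem L).2 hNpos.le
  -- invert
  have hinv := hquot.inv₀ hD.ne'
  refine hinv.congr' ?_
  filter_upwards [eventually_gt_atTop 0] with L hL
  have hNpos : (0:ℝ) < (N L : ℝ) := by
    have := (hmem L).1; positivity
  rw [inv_div]
open MeasureTheory Filter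
open scoped ENNReal

section
variable {Obs : Type*} [Fintype Obs] [MeasurableSpace Obs] [MeasurableSingletonClass Obs]
variable {Ω : Type*} [MeasurableSpace Ω]

lemma box (p : Obs → ℝ) (hp_sum : ∑ y, p y = 1)
    (ℙ : Measure Ω) (Y : ℕ → Ω → Obs) (hYmeas : ∀ k, Measurable (Y k))
    (hiid : ∀ (n : ℕ) (ys : ℕ → Obs),
      ℙ {ω | ∀ k < n, Y k ω = ys k}
        = ∏ k ∈ Finset.range n, ENNReal.ofReal (p (ys k)))
    (n : ℕ) (B : ℕ → Finset Obs) :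
    ℙ {ω | ∀ k < n, Y k ω ∈ B k}
      = ∏ k ∈ Finset.range n, ∑ y ∈ B k, ENNReal.ofReal (p y) := by
  classical
  have hObs : Nonempty Obs := by
    by_contra h
    rw [not_nonempty_iff] at h
    simp [Finset.univ_eq_empty] at hp_sum
  obtain ⟨y₀⟩ := hObs
  set ext : (Fin n → Obs) → ℕ → Obs :=
    fun v k => if h : k < n then v ⟨k, h⟩ else y₀ with hext
  set A : Finset (Fin n → Obs) := Fintype.piFinset (fun i => B (i : ℕ)) with hA
  have hdecomp : {ω | ∀ k < n, Y k ω ∈ B k}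
      = ⋃ v ∈ A, {ω | ∀ k < n, Y k ω = ext v k} := by
    ext ω
    simp only [Set.mem_setOf_eq, Set.mem_iUnion]
    constructor
    · intro h
      refine ⟨fun i => Y (i : ℕ) ω, ?_, ?_⟩
      · rw [hA, Fintype.mem_piFinset]
        exact fun i => h i i.2
      · intro k hk
        simp [hext, hk]
    · rintro ⟨v, hv, hvω⟩
      intro k hk
      have := hvω k hk
      rw [this]
      simp only [hext, dif_pos hk]
      rw [hA, Fintype.mem_piFinset] at hv
      exact hv ⟨k, hk⟩
  rw [hdecomp, measure_biUnion_finset ?_ ?_]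
  · rw [Finset.sum_congr rfl (fun v _ => hiid n (ext v))]
    have hprod : ∀ v : Fin n → Obs,
        (∏ k ∈ Finset.range n, ENNReal.ofReal (p (ext v k)))
          = ∏ i : Fin n, ENNReal.ofReal (p (v i)) := by
      intro v
      rw [← Fin.prod_univ_eq_prod_range fun k => ENNReal.ofReal (p (ext v k))]
      refine Finset.prod_congr rfl fun i _ => ?_
      simp [hext, i.2]
    rw [Finset.sum_congr rfl (fun v _ => hprod v), hA,
      ← Finset.prod_univ_sum (fun i : Fin n => B (i : ℕ))
        (fun _ y => ENNReal.ofReal (p y)),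
      Fin.prod_univ_eq_prod_range fun k => ∑ y ∈ B k, ENNReal.ofReal (p y)]
  · -- pairwise disjoint
    intro v hv w hw hvw
    simp only [Function.onFun]
    rw [Set.disjoint_left]
    intro ω hω1 hω2
    apply hvw
    funext i
    have h1 := hω1 i i.2
    have h2 := hω2 i i.2
    simp only [hext, dif_pos i.2] at h1 h2
    rw [← h1, ← h2]
  · intro v hv
    have : {ω | ∀ k < n, Y k ω = ext v k}
        = ⋂ k ∈ Finset.range n, Y k ⁻¹' {ext v k} := by
      ext ω; simp [Set.mem_iInter]
    rw [this]
    exact MeasurableSet.biInter (Finset.range n).countable_toSet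
      (fun k _ => hYmeas k (measurableSet_singleton _))
end

section
variable {Obs : Type*} [Fintype Obs] [MeasurableSpace Obs] [MeasurableSingletonClass Obs]
variable {Ω : Type*} [MeasurableSpace Ω]
variable (p : Obs → ℝ) (hp_nonneg : ∀ y, 0 ≤ p y) (hp_sum : ∑ y, p y = 1)
variable (ℙ : Measure Ω) (Y : ℕ → Ω → Obs) (hYmeas : ∀ k, Measurable (Y k))
variable (hiid : ∀ (n : ℕ) (ys : ℕ → Obs),
      ℙ {ω | ∀ k < n, Y k ω = ys k}
        = ∏ k ∈ Finset.range n, ENNReal.ofReal (p (ys k)))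

include hp_nonneg hp_sum hYmeas hiid

lemma sum_ofReal_univ : ∑ y : Obs, ENNReal.ofReal (p y) = 1 := by
  rw [← ENNReal.ofReal_sum_of_nonneg (fun y _ => hp_nonneg y), hp_sum,
    ENNReal.ofReal_one]

lemma meas_box (S : Finset ℕ) (B : ℕ → Finset Obs)
    (hB : ∀ k ∉ S, B k = Finset.univ) :
    ℙ (⋂ i ∈ S, {ω | Y i ω ∈ B i}) = ∏ i ∈ S, ∑ y ∈ B i, ENNReal.ofReal (p y) := by
  classical
  set n := S.sup id + 1 with hn
  have hSn : ∀ i ∈ S, i < n := fun i hi =>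
    Nat.lt_succ_of_le (Finset.le_sup (f := id) hi)
  have hev : (⋂ i ∈ S, {ω | Y i ω ∈ B i}) = {ω | ∀ k < n, Y k ω ∈ B k} := by
    ext ω
    simp only [Set.mem_iInter, Set.mem_setOf_eq]
    constructor
    · intro h k hk
      by_cases hkS : k ∈ S
      · exact h k hkS
      · rw [hB k hkS]; exact Finset.mem_univ _
    · intro h i hi
      exact h i (hSn i hi)
  rw [hev, box p hp_sum ℙ Y hYmeas hiid n B]
  have hsub : S ⊆ Finset.range n := fun i hi => Finset.mem_range.2 (hSn i hi)
  rw [← Finset.prod_subset hsub]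
  intro x _ hxS
  rw [hB x hxS]
  exact sum_ofReal_univ p hp_nonneg hp_sum ℙ Y hYmeas hiid

lemma dist_finset (k : ℕ) (s : Finset Obs) :
    ℙ {ω | Y k ω ∈ s} = ∑ y ∈ s, ENNReal.ofReal (p y) := by
  classical
  set B : ℕ → Finset Obs := fun j => if j = k then s else Finset.univ with hB
  have hBk : B k = s := by simp [hB]
  have hbox := meas_box p hp_nonneg hp_sum ℙ Y hYmeas hiid {k} B
    (fun j hj => by
      have : j ≠ k := by simpa using hj
      simp [hB, this])
  rw [Finset.set_biInter_singleton, Finset.prod_singleton, hBk] at hbox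
  exact hbox

lemma dist_set (k : ℕ) (s : Set Obs) :
    ℙ (Y k ⁻¹' s) = ∑ y ∈ (Set.toFinite s).toFinset, ENNReal.ofReal (p y) := by
  rw [← dist_finset p hp_nonneg hp_sum ℙ Y hYmeas hiid k]
  congr 1
  ext ω
  simp [Set.Finite.mem_toFinset]

lemma pair_indep (i j : ℕ) (hij : i ≠ j) :
    ProbabilityTheory.IndepFun (Y i) (Y j) ℙ := by
  classical
  rw [ProbabilityTheory.indepFun_iff_measure_inter_preimage_eq_mul]
  intro s t _ _
  set s' := (Set.toFinite s).toFinset with hs'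
  set t' := (Set.toFinite t).toFinset with ht'
  set B : ℕ → Finset Obs := fun k => if k = i then s' else if k = j then t'
    else Finset.univ with hB
  have hBi : B i = s' := by simp [hB]
  have hBj : B j = t' := by simp [hB, hij.symm]
  have hbox := meas_box p hp_nonneg hp_sum ℙ Y hYmeas hiid {i, j} B
    (fun k hk => by
      simp only [Finset.mem_insert, Finset.mem_singleton] at hk
      push_neg at hk
      simp [hB, hk.1, hk.2])
  have hev : (⋂ k ∈ ({i, j} : Finset ℕ), {ω | Y k ω ∈ B k})
      = Y i ⁻¹' s ∩ Y j ⁻¹' t := by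
    rw [Finset.set_biInter_insert, Finset.set_biInter_singleton, hBi, hBj]
    ext ω
    simp only [Set.mem_inter_iff, Set.mem_setOf_eq, Set.mem_preimage,
      Set.Finite.mem_toFinset, hs', ht']
  rw [hev, Finset.prod_pair hij, hBi, hBj] at hbox
  rw [hbox, dist_set p hp_nonneg hp_sum ℙ Y hYmeas hiid i s,
    dist_set p hp_nonneg hp_sum ℙ Y hYmeas hiid j t]

lemma ident_dist (k : ℕ) :
    ProbabilityTheory.IdentDistrib (Y k) (Y 0) ℙ ℙ := by
  refine ⟨(hYmeas k).aemeasurable, (hYmeas 0).aemeasurable, ?_⟩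
  ext s hs
  rw [Measure.map_apply (hYmeas k) hs, Measure.map_apply (hYmeas 0) hs,
    dist_set p hp_nonneg hp_sum ℙ Y hYmeas hiid k s,
    dist_set p hp_nonneg hp_sum ℙ Y hYmeas hiid 0 s]

lemma supp_null :
    ℙ {ω | ∃ k, p (Y k ω) = 0} = 0 := by
  classical
  have h1 : {ω | ∃ k, p (Y k ω) = 0} = ⋃ k, Y k ⁻¹' {y | p y = 0} := by
    ext ω; simp [Set.mem_iUnion]
  rw [h1]
  refine measure_iUnion_null fun k => ?_
  rw [dist_set p hp_nonneg hp_sum ℙ Y hYmeas hiid k]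
  refine Finset.sum_eq_zero fun y hy => ?_
  rw [Set.Finite.mem_toFinset] at hy
  rw [hy, ENNReal.ofReal_zero]
end

section
variable {Obs : Type*} [Fintype Obs]

lemma kl_sum_eq (p q : Obs → ℝ) (hsupp : ∀ y, p y = 0 ↔ q y = 0) :
    ∑ y, p y * Real.log (p y / q y)
      = ∑ y, p y * (Real.log (p y) - Real.log (q y)) := by
  refine Finset.sum_congr rfl fun y _ => ?_
  by_cases hp : p y = 0
  · simp [hp]
  · have hq : q y ≠ 0 := fun h => hp ((hsupp y).2 h)
    rw [Real.log_div hp hq]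

lemma kl_pos (p q : Obs → ℝ) (hp_nonneg : ∀ y, 0 ≤ p y) (hq_nonneg : ∀ y, 0 ≤ q y)
    (hp_sum : ∑ y, p y = 1) (hq_sum : ∑ y, q y = 1)
    (hne : p ≠ q) (hsupp : ∀ y, p y = 0 ↔ q y = 0) :
    0 < ∑ y, p y * (Real.log (p y) - Real.log (q y)) := by
  have key : ∑ y, p y * (Real.log (q y) - Real.log (p y)) < 0 := by
    have hle : ∀ y : Obs, p y * (Real.log (q y) - Real.log (p y)) ≤ q y - p y := by
      intro y
      by_cases hp : p y = 0
      · have hq := (hsupp y).1 hp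
        simp [hp, hq]
      · have hpp : 0 < p y := lt_of_le_of_ne (hp_nonneg y) (Ne.symm hp)
        have hq : q y ≠ 0 := fun h => hp ((hsupp y).2 h)
        have hqq : 0 < q y := lt_of_le_of_ne (hq_nonneg y) (Ne.symm hq)
        have h1 : Real.log (q y) - Real.log (p y) = Real.log (q y / p y) :=
          (Real.log_div hq hp).symm
        have h2 : Real.log (q y / p y) ≤ q y / p y - 1 :=
          Real.log_le_sub_one_of_pos (div_pos hqq hpp)
        rw [h1]
        calc p y * Real.log (q y / p y) ≤ p y * (q y / p y - 1) := by
              exact mul_le_mul_of_nonneg_left h2 hpp.le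
          _ = q y - p y := by field_simp
    obtain ⟨y₀, hy₀⟩ : ∃ y, p y ≠ q y := by
      by_contra h
      push_neg at h
      exact hne (funext h)
    have hstrict : p y₀ * (Real.log (q y₀) - Real.log (p y₀)) < q y₀ - p y₀ := by
      have hp : p y₀ ≠ 0 := by
        intro h
        exact hy₀ (h.trans ((hsupp y₀).1 h).symm)
      have hpp : 0 < p y₀ := lt_of_le_of_ne (hp_nonneg y₀) (Ne.symm hp)
      have hq : q y₀ ≠ 0 := fun h => hp ((hsupp y₀).2 h)
      have hqq : 0 < q y₀ := lt_of_le_of_ne (hq_nonneg y₀) (Ne.symm hq)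
      have h1 : Real.log (q y₀) - Real.log (p y₀) = Real.log (q y₀ / p y₀) :=
        (Real.log_div hq hp).symm
      have hne1 : q y₀ / p y₀ ≠ 1 := by
        intro h
        rw [div_eq_one_iff_eq hp] at h
        exact hy₀ h.symm
      have h2 : Real.log (q y₀ / p y₀) < q y₀ / p y₀ - 1 :=
        Real.log_lt_sub_one_of_pos (div_pos hqq hpp) hne1
      rw [h1]
      calc p y₀ * Real.log (q y₀ / p y₀) < p y₀ * (q y₀ / p y₀ - 1) :=
            (mul_lt_mul_iff_right₀ hpp).2 h2
        _ = q y₀ - p y₀ := by field_simp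
    have hsum := Finset.sum_lt_sum (fun y _ => hle y)
      ⟨y₀, Finset.mem_univ y₀, hstrict⟩
    have : ∑ y, (q y - p y) = 0 := by
      rw [Finset.sum_sub_distrib, hp_sum, hq_sum, sub_self]
    linarith
  have : ∑ y, p y * (Real.log (p y) - Real.log (q y))
      = -∑ y, p y * (Real.log (q y) - Real.log (p y)) := by
    rw [← Finset.sum_neg_distrib]
    exact Finset.sum_congr rfl fun y _ => by ring
  rw [this]
  linarith
end

section
variable {Obs : Type*} [Fintype Obs] [MeasurableSpace Obs] [MeasurableSingletonClass Obs]
variable {Ω : Type*} [MeasurableSpace Ω]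
variable (p : Obs → ℝ) (hp_nonneg : ∀ y, 0 ≤ p y) (hp_sum : ∑ y, p y = 1)
variable (ℙ : Measure Ω) (hprob : IsProbabilityMeasure ℙ)
variable (Y : ℕ → Ω → Obs) (hYmeas : ∀ k, Measurable (Y k))
variable (hiid : ∀ (n : ℕ) (ys : ℕ → Obs),
      ℙ {ω | ∀ k < n, Y k ω = ys k}
        = ∏ k ∈ Finset.range n, ENNReal.ofReal (p (ys k)))

include hp_nonneg hp_sum hprob hYmeas hiid

lemma exp_f (f : Obs → ℝ) :
    ∫ ω, f (Y 0 ω) ∂ℙ = ∑ y, p y * f y := by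
  have hfmeas : Measurable f := measurable_of_countable f
  have hmap := Measure.isProbabilityMeasure_map (μ := ℙ) (hYmeas 0).aemeasurable
  rw [← MeasureTheory.integral_map (hYmeas 0).aemeasurable
    hfmeas.aestronglyMeasurable]
  rw [MeasureTheory.integral_fintype Integrable.of_finite]
  refine Finset.sum_congr rfl fun y _ => ?_
  rw [Measure.real, Measure.map_apply (hYmeas 0) (measurableSet_singleton y),
    dist_set p hp_nonneg hp_sum ℙ Y hYmeas hiid 0 {y}]
  have : (Set.toFinite ({y} : Set Obs)).toFinset = {y} := by
    simp
  rw [this, Finset.sum_singleton, smul_eq_mul,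
    ENNReal.toReal_ofReal (hp_nonneg y)]

lemma slln (f : Obs → ℝ) :
    ∀ᵐ ω ∂ℙ, Tendsto (fun n : ℕ => (∑ i ∈ Finset.range n, f (Y i ω)) / n)
      atTop (nhds (∑ y, p y * f y)) := by
  have hfmeas : Measurable f := measurable_of_countable f
  have hint : Integrable (fun ω => f (Y 0 ω)) ℙ := by
    have h1 : Integrable f (Measure.map (Y 0) ℙ) := by
      have := Measure.isProbabilityMeasure_map (μ := ℙ) (hYmeas 0).aemeasurable
      exact Integrable.of_finite
    exact (integrable_map_measure hfmeas.aestronglyMeasurable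
      (hYmeas 0).aemeasurable).1 h1
  have heq := exp_f p hp_nonneg hp_sum ℙ hprob Y hYmeas hiid f
  have := ProbabilityTheory.strong_law_ae_real (μ := ℙ)
    (fun i ω => f (Y i ω)) hint
    (fun i j hij => ProbabilityTheory.IndepFun.comp
      (pair_indep p hp_nonneg hp_sum ℙ Y hYmeas hiid i j hij) hfmeas hfmeas)
    (fun i => ProbabilityTheory.IdentDistrib.comp
      (ident_dist p hp_nonneg hp_sum ℙ Y hYmeas hiid i) hfmeas)
  rw [heq] at this
  exact this
end

lemma main_side {Obs : Type*} [Fintype Obs]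
    [MeasurableSpace Obs] [MeasurableSingletonClass Obs]
    (p q : Obs → ℝ)
    (hp_nonneg : ∀ y, 0 ≤ p y) (hq_nonneg : ∀ y, 0 ≤ q y)
    (hp_sum : ∑ y, p y = 1) (hq_sum : ∑ y, q y = 1)
    (hne : p ≠ q)
    (hsupp : ∀ y, p y = 0 ↔ q y = 0)
    (Ω : Type*) [MeasurableSpace Ω]
    (ℙ : Measure Ω) (hprob : IsProbabilityMeasure ℙ)
    (Y : ℕ → Ω → Obs) (hYmeas : ∀ k, Measurable (Y k))
    (hiid : ∀ (n : ℕ) (ys : ℕ → Obs),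
      ℙ {ω | ∀ k < n, Y k ω = ys k}
        = ∏ k ∈ Finset.range n, ENNReal.ofReal (p (ys k)))
    (c : ℝ) (hc : 0 < c) :
    ∀ᵐ ω ∂ℙ, Filter.Tendsto
      (fun T : ℝ =>
        ((sInf {n : ℕ∞ | ∃ m' : ℕ, (m' : ℕ∞) = n ∧ 1 ≤ m' ∧
            T ^ c * ∏ k ∈ Finset.range m', q (Y k ω)
              ≤ ∏ k ∈ Finset.range m', p (Y k ω)} : ℕ∞) : ℝ≥0∞)
          / ENNReal.ofReal (Real.log T))
      Filter.atTop
      (nhds (ENNReal.ofReal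
        (c / ∑ y, p y * Real.log (p y / q y)))) := by
  classical
  set f : Obs → ℝ := fun y => Real.log (p y) - Real.log (q y) with hf
  set D : ℝ := ∑ y, p y * f y with hDdef
  have hDpos : 0 < D :=
    kl_pos p q hp_nonneg hq_nonneg hp_sum hq_sum hne hsupp
  have hDeq : (∑ y, p y * Real.log (p y / q y)) = D := kl_sum_eq p q hsupp
  rw [hDeq]
  have hslln := slln p hp_nonneg hp_sum ℙ hprob Y hYmeas hiid f
  have hae : ∀ᵐ ω ∂ℙ, ∀ k, p (Y k ω) ≠ 0 := by
    rw [ae_iff]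
    have hseteq : {ω | ¬∀ k, p (Y k ω) ≠ 0} = {ω | ∃ k, p (Y k ω) = 0} := by
      ext ω; simp
    rw [hseteq]
    exact supp_null p hp_nonneg hp_sum ℙ Y hYmeas hiid
  filter_upwards [hslln, hae] with ω hSll hωsupp
  set S : ℕ → ℝ := fun m => ∑ k ∈ Finset.range m, f (Y k ω) with hSdef
  have hppos : ∀ k, 0 < p (Y k ω) :=
    fun k => lt_of_le_of_ne (hp_nonneg _) (Ne.symm (hωsupp k))
  have hqpos : ∀ k, 0 < q (Y k ω) := fun k =>
    lt_of_le_of_ne (hq_nonneg _)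
      (Ne.symm (fun h => hωsupp k ((hsupp _).2 h)))
  have hP : ∀ m, 0 < ∏ k ∈ Finset.range m, p (Y k ω) :=
    fun m => Finset.prod_pos fun k _ => hppos k
  have hQ : ∀ m, 0 < ∏ k ∈ Finset.range m, q (Y k ω) :=
    fun m => Finset.prod_pos fun k _ => hqpos k
  have hSm : ∀ m, S m = Real.log (∏ k ∈ Finset.range m, p (Y k ω))
      - Real.log (∏ k ∈ Finset.range m, q (Y k ω)) := by
    intro m
    rw [Real.log_prod (fun k _ => (hppos k).ne'),
      Real.log_prod (fun k _ => (hqpos k).ne'), hSdef]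
    exact Finset.sum_sub_distrib _ _
  have hStop : Tendsto S atTop atTop := myS_atTop S D hDpos hSll
  -- condition equivalence for T > 1
  have hcond : ∀ T : ℝ, 1 < T → ∀ m : ℕ,
      (T ^ c * ∏ k ∈ Finset.range m, q (Y k ω)
        ≤ ∏ k ∈ Finset.range m, p (Y k ω)
        ↔ c * Real.log T ≤ S m) := by
    intro T hT m
    have hTpos : (0:ℝ) < T := lt_trans one_pos hT
    have hTc : (0:ℝ) < T ^ c := Real.rpow_pos_of_pos hTpos c
    have hlhs : 0 < T ^ c * ∏ k ∈ Finset.range m, q (Y k ω) :=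
      mul_pos hTc (hQ m)
    rw [← Real.log_le_log_iff hlhs (hP m),
      Real.log_mul hTc.ne' (hQ m).ne', Real.log_rpow hTpos, hSm m]
    constructor <;> intro h <;> linarith
  -- set equality and sInf identification
  have hkey : ∀ T : ℝ, 1 < T →
      (sInf {n : ℕ∞ | ∃ m' : ℕ, (m' : ℕ∞) = n ∧ 1 ≤ m' ∧
          T ^ c * ∏ k ∈ Finset.range m', q (Y k ω)
            ≤ ∏ k ∈ Finset.range m', p (Y k ω)} : ℕ∞)
        = ((sInf {m : ℕ | 1 ≤ m ∧ c * Real.log T ≤ S m} : ℕ) : ℕ∞) := by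
    intro T hT
    have hseteq : {n : ℕ∞ | ∃ m' : ℕ, (m' : ℕ∞) = n ∧ 1 ≤ m' ∧
        T ^ c * ∏ k ∈ Finset.range m', q (Y k ω)
          ≤ ∏ k ∈ Finset.range m', p (Y k ω)}
        = (fun m : ℕ => (m : ℕ∞)) ''
            {m : ℕ | 1 ≤ m ∧ c * Real.log T ≤ S m} := by
      ext n
      simp only [Set.mem_setOf_eq, Set.mem_image]
      constructor
      · rintro ⟨m, rfl, h1, h2⟩
        exact ⟨m, ⟨h1, (hcond T hT m).1 h2⟩, rfl⟩
      · rintro ⟨m, ⟨h1, h2⟩, rfl⟩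
        exact ⟨m, rfl, h1, (hcond T hT m).2 h2⟩
    rw [hseteq]
    have hAne := hit_nonempty S hStop (c * Real.log T)
    refine le_antisymm (sInf_le ⟨_, Nat.sInf_mem hAne, rfl⟩) ?_
    refine le_sInf ?_
    rintro b ⟨m, hm, rfl⟩
    simp only []
    exact_mod_cast Nat.sInf_le hm
  -- real convergence
  set N : ℝ → ℕ := fun L => sInf {m : ℕ | 1 ≤ m ∧ L ≤ S m} with hNdef
  have hdet := det S D hDpos hSll
  have hlog : Tendsto (fun T : ℝ => c * Real.log T) atTop atTop :=
    (Real.tendsto_log_atTop).const_mul_atTop hc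
  have hcomp : Tendsto (fun T : ℝ => (N (c * Real.log T) : ℝ) / (c * Real.log T))
      atTop (nhds D⁻¹) := hdet.comp hlog
  have hmul := hcomp.const_mul c
  have hreal : Tendsto (fun T : ℝ => (N (c * Real.log T) : ℝ) / Real.log T)
      atTop (nhds (c / D)) := by
    rw [div_eq_mul_inv c D]
    refine hmul.congr' ?_
    filter_upwards [eventually_gt_atTop 1] with T hT
    have hlogpos : 0 < Real.log T := Real.log_pos hT
    field_simp
  have hfinal := (ENNReal.continuous_ofReal.tendsto _).comp hreal
  refine hfinal.congr' ?_ |>.mono_right ?_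
  · filter_upwards [eventually_gt_atTop 1] with T hT
    have hlogpos : 0 < Real.log T := Real.log_pos hT
    rw [hkey T hT, ENat.toENNReal_coe, ← ENNReal.ofReal_natCast,
      ← ENNReal.ofReal_div_of_pos hlogpos]
    rfl
  · exact le_rfl


/-- **Almost-sure first-order asymptotics of the individual stopping times of
the two-threshold binary SPRT.**  `p0 ≠ p1` are pmfs on a finite set `Obs` with
mutually finite KL divergences (equal supports); under hypothesis `i ∈ {0,1}`
the observations are i.i.d. with pmf `p i`.  With `c > 0` and, for each
threshold `T`, `N0(T) = min{n ≥ 1 : p0(Y^n) ≥ T^c · p1(Y^n)}` and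
`N1(T) = min{n ≥ 1 : p1(Y^n) ≥ T · p0(Y^n)}`, one has, as `T → ∞`,
`N0(T)/log T → c / D(p0‖p1)` a.s. under `ℙ0` and
`N1(T)/log T → 1 / D(p1‖p0)` a.s. under `ℙ1`
(stated in `ℝ≥0∞`, so a nonstopping trajectory gives the value `∞`). -/
theorem stmt_3 {Obs : Type*} [Fintype Obs]
    [MeasurableSpace Obs] [MeasurableSingletonClass Obs]
    (p0 p1 : Obs → ℝ)
    (hp0_nonneg : ∀ y, 0 ≤ p0 y) (hp1_nonneg : ∀ y, 0 ≤ p1 y)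
    (hp0_sum : ∑ y, p0 y = 1) (hp1_sum : ∑ y, p1 y = 1)
    (hne : p0 ≠ p1)
    (hsupp : ∀ y, p0 y = 0 ↔ p1 y = 0)
    (Ω : Type*) [MeasurableSpace Ω]
    (ℙ0 ℙ1 : Measure Ω)
    (hprob0 : IsProbabilityMeasure ℙ0) (hprob1 : IsProbabilityMeasure ℙ1)
    (Y : ℕ → Ω → Obs) (hYmeas : ∀ k, Measurable (Y k))
    (hiid0 : ∀ (n : ℕ) (ys : ℕ → Obs),
      ℙ0 {ω | ∀ k < n, Y k ω = ys k}
        = ∏ k ∈ Finset.range n, ENNReal.ofReal (p0 (ys k)))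
    (hiid1 : ∀ (n : ℕ) (ys : ℕ → Obs),
      ℙ1 {ω | ∀ k < n, Y k ω = ys k}
        = ∏ k ∈ Finset.range n, ENNReal.ofReal (p1 (ys k)))
    (c : ℝ) (hc : 0 < c) :
    (∀ᵐ ω ∂ℙ0, Filter.Tendsto
      (fun T : ℝ =>
        ((sInf {n : ℕ∞ | ∃ m' : ℕ, (m' : ℕ∞) = n ∧ 1 ≤ m' ∧
            T ^ c * ∏ k ∈ Finset.range m', p1 (Y k ω)
              ≤ ∏ k ∈ Finset.range m', p0 (Y k ω)} : ℕ∞) : ℝ≥0∞)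
          / ENNReal.ofReal (Real.log T))
      Filter.atTop
      (nhds (ENNReal.ofReal
        (c / ∑ y, p0 y * Real.log (p0 y / p1 y)))))
    ∧
    (∀ᵐ ω ∂ℙ1, Filter.Tendsto
      (fun T : ℝ =>
        ((sInf {n : ℕ∞ | ∃ m' : ℕ, (m' : ℕ∞) = n ∧ 1 ≤ m' ∧
            T * ∏ k ∈ Finset.range m', p0 (Y k ω)
              ≤ ∏ k ∈ Finset.range m', p1 (Y k ω)} : ℕ∞) : ℝ≥0∞)
          / ENNReal.ofReal (Real.log T))
      Filter.atTop
      (nhds (ENNReal.ofReal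
        (1 / ∑ y, p1 y * Real.log (p1 y / p0 y))))) := by
  constructor
  · exact main_side p0 p1 hp0_nonneg hp1_nonneg hp0_sum hp1_sum hne hsupp
      Ω ℙ0 hprob0 Y hYmeas hiid0 c hc
  · have h := main_side p1 p0 hp1_nonneg hp0_nonneg hp1_sum hp0_sum
      (Ne.symm hne) (fun y => (hsupp y).symm)
      Ω ℙ1 hprob1 Y hYmeas hiid1 1 one_pos
    simpa [Real.rpow_one] using h
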